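/- Fix k > 0, c > 0, δ > 0 and C₀ ≥ 0, and let b : ℝ → ℂ be measurable with |b(t)| ≤ C₀ e^{2ck(1+t²)} for all t ∈ ℝ. Then for every z ∈ ℂ with Re z ≥ 0, Im z ≥ 0 and |z| > 4c, the integral over {t : |t| ≥ δ} is absolutely convergent and |∫_{|t|≥δ} e^{−k t² z e^{−iπ/4}} b(t) dt| ≤ C₀ e^{2ck} · e^{−k(|z|/2 − 2c)δ²} / (k(|z|/2 − 2c)δ). -/

import Mathlib

open MeasureTheory Set Real

noncomputable section

lemma tail_integral_eq (a δ : ℝ) (ha : 0 < a) :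
    (∫ t in Ioi δ, t * Real.exp (-a * t ^ 2)) = Real.exp (-a * δ ^ 2) / (2 * a) := by
  have h := integral_Ioi_of_hasDerivAt_of_tendsto
    (f := fun x => -Real.exp (-a * x ^ 2) / (2 * a))
    (f' := fun x => x * Real.exp (-a * x ^ 2)) (a := δ) (m := 0)
    ?_ ?_ ?_ ?_
  · rw [h]; ring
  · exact (Continuous.continuousWithinAt (by continuity))
  · intro x _
    have : HasDerivAt (fun x : ℝ => -Real.exp (-a * x ^ 2) / (2 * a))
        (-(Real.exp (-a * x ^ 2) * (-a * (2 * x))) / (2 * a)) x := by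
      have h1 : HasDerivAt (fun x : ℝ => -a * x ^ 2) (-a * (2 * x)) x := by
        simpa using ((hasDerivAt_pow 2 x).const_mul (-a))
      exact ((h1.exp).neg).div_const (2 * a)
    refine this.congr_deriv ?_
    rw [div_eq_iff (by positivity)]
    ring
  · exact (integrable_mul_exp_neg_mul_sq ha).integrableOn
  · have : Filter.Tendsto (fun x : ℝ => Real.exp (-a * x ^ 2)) Filter.atTop (nhds 0) := by
      have h1 : Filter.Tendsto (fun x : ℝ => -a * x ^ 2) Filter.atTop Filter.atBot := by
        apply Filter.Tendsto.const_mul_atTop_of_neg (by linarith : -a < 0)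
        exact Filter.tendsto_pow_atTop (by norm_num)
      exact Real.tendsto_exp_atBot.comp h1
    have := (this.neg).div_const (2 * a)
    simpa using this

lemma tail_gauss (a δ : ℝ) (ha : 0 < a) (hδ : 0 < δ) :
    (∫ t in Ici δ, Real.exp (-a * t ^ 2)) ≤ Real.exp (-a * δ ^ 2) / (2 * a * δ) := by
  have hint2 : IntegrableOn (fun t => t / δ * Real.exp (-a * t ^ 2)) (Ici δ) := by
    have := ((integrable_mul_exp_neg_mul_sq ha).div_const δ).integrableOn (s := Ici δ)
    refine this.congr_fun (fun x _ => by ring) measurableSet_Ici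
  have hint1 : IntegrableOn (fun t => Real.exp (-a * t ^ 2)) (Ici δ) :=
    (integrable_exp_neg_mul_sq ha).integrableOn
  have hmono : (∫ t in Ici δ, Real.exp (-a * t ^ 2)) ≤
      ∫ t in Ici δ, t / δ * Real.exp (-a * t ^ 2) := by
    refine setIntegral_mono_on hint1 hint2 measurableSet_Ici (fun x hx => ?_)
    have hx' : δ ≤ x := hx
    have h1 : (1 : ℝ) ≤ x / δ := (one_le_div hδ).mpr hx'
    nlinarith [Real.exp_pos (-a * x ^ 2), (Real.exp_pos (-a * x ^ 2)).le]
  have heq : (∫ t in Ici δ, t / δ * Real.exp (-a * t ^ 2)) =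
      Real.exp (-a * δ ^ 2) / (2 * a * δ) := by
    rw [integral_Ici_eq_integral_Ioi]
    have : (∫ t in Ioi δ, t / δ * Real.exp (-a * t ^ 2)) =
        (∫ t in Ioi δ, t * Real.exp (-a * t ^ 2)) / δ := by
      rw [← integral_div]
      exact setIntegral_congr_fun measurableSet_Ioi (fun x _ => by ring)
    rw [this, tail_integral_eq a δ ha]
    field_simp
  linarith

theorem statement_12 (k c δ C₀ : ℝ) (hk : 0 < k) (hc : 0 < c) (hδ : 0 < δ)
    (hC₀ : 0 ≤ C₀) (b : ℝ → ℂ) (hb : Measurable b)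
    (hbd : ∀ t : ℝ, ‖b t‖ ≤ C₀ * Real.exp (2 * c * k * (1 + t ^ 2))) :
    ∀ z : ℂ, 0 ≤ z.re → 0 ≤ z.im → 4 * c < ‖z‖ →
      IntegrableOn (fun t : ℝ =>
        Complex.exp (-k * t ^ 2 * z * Complex.exp (-(π / 4) * Complex.I)) * b t)
        {t : ℝ | δ ≤ |t|} volume ∧
      ‖∫ t in {t : ℝ | δ ≤ |t|},
          Complex.exp (-k * t ^ 2 * z * Complex.exp (-(π / 4) * Complex.I)) * b t‖ ≤
        C₀ * Real.exp (2 * c * k) *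
          Real.exp (-k * (‖z‖ / 2 - 2 * c) * δ ^ 2) /
            (k * (‖z‖ / 2 - 2 * c) * δ) := by
  intro z hre him hz
  set E : ℂ := Complex.exp (-(π / 4) * Complex.I) with hE
  set a : ℝ := k * (‖z‖ / 2 - 2 * c) with ha_def
  have ha : 0 < a := by
    apply mul_pos hk; linarith
  set M : ℝ := C₀ * Real.exp (2 * c * k) with hM
  have hM0 : 0 ≤ M := by positivity
  set f : ℝ → ℂ := fun t => Complex.exp (-k * t ^ 2 * z * E) * b t with hf
  -- real/imag parts of E
  have hEre : E.re = Real.sqrt 2 / 2 ∧ E.im = -(Real.sqrt 2 / 2) := by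
    have : (-(↑π / 4) : ℂ) = ((-(π / 4) : ℝ) : ℂ) := by push_cast; ring
    rw [hE, this]
    constructor
    · rw [Complex.exp_ofReal_mul_I_re, Real.cos_neg, Real.cos_pi_div_four]
    · rw [Complex.exp_ofReal_mul_I_im, Real.sin_neg, Real.sin_pi_div_four]
  have habs : ‖z‖ ≤ z.re + z.im := by
    have h2 : ‖z‖ ^ 2 = z.re ^ 2 + z.im ^ 2 := by
      rw [Complex.sq_norm, Complex.normSq_apply]; ring
    nlinarith [norm_nonneg z, sq_nonneg (z.re - z.im), sq_nonneg (z.re + z.im)]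
  have hsqrt2 : (1 : ℝ) ≤ Real.sqrt 2 := by
    rw [show (1:ℝ) = Real.sqrt 1 by simp]
    exact Real.sqrt_le_sqrt (by norm_num)
  -- pointwise bound
  have hpt : ∀ t : ℝ, ‖f t‖ ≤ M * Real.exp (-a * t ^ 2) := by
    intro t
    have hwre : ((-k : ℂ) * (t : ℂ) ^ 2 * z * E).re ≤ -k * t ^ 2 * (‖z‖ / 2) := by
      have h0 : ((-k : ℂ) * (t : ℂ) ^ 2 * z * E) = ((-k * t ^ 2 : ℝ) : ℂ) * (z * E) := by
        push_cast; ring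
      have h1 : ((-k : ℂ) * (t : ℂ) ^ 2 * z * E).re
          = -k * t ^ 2 * (z.re * E.re - z.im * E.im) := by
        rw [h0]
        simp [Complex.mul_re, Complex.mul_im, ← Complex.ofReal_pow, Complex.ofReal_re,
          Complex.ofReal_im]
      rw [h1, hEre.1, hEre.2]
      have hkt : 0 ≤ k * t ^ 2 := by positivity
      have h4 : ‖z‖ / 2 ≤ z.re * (Real.sqrt 2 / 2) - z.im * -(Real.sqrt 2 / 2) := by
        nlinarith [habs, hsqrt2, hre, him]
      have h5 := mul_le_mul_of_nonneg_left h4 hkt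
      nlinarith [h5]
    have h2 : ‖Complex.exp (-↑k * ↑t ^ 2 * z * E)‖ ≤ Real.exp (-k * t ^ 2 * (‖z‖ / 2)) := by
      rw [Complex.norm_exp]
      exact Real.exp_le_exp.mpr hwre
    have h3 : ‖b t‖ ≤ C₀ * Real.exp (2 * c * k * (1 + t ^ 2)) := hbd t
    calc ‖f t‖ = ‖Complex.exp (-↑k * ↑t ^ 2 * z * E)‖ * ‖b t‖ := norm_mul _ _
      _ ≤ Real.exp (-k * t ^ 2 * (‖z‖ / 2)) * (C₀ * Real.exp (2 * c * k * (1 + t ^ 2))) := by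
          apply mul_le_mul h2 h3 (norm_nonneg _) (Real.exp_pos _).le
      _ = M * Real.exp (-a * t ^ 2) := by
          rw [show M * Real.exp (-a * t ^ 2)
              = C₀ * Real.exp (2 * c * k + -(k * (‖z‖ / 2 - 2 * c)) * t ^ 2) from by
            rw [hM, ha_def, Real.exp_add]; ring]
          rw [show Real.exp (-k * t ^ 2 * (‖z‖ / 2)) *
              (C₀ * Real.exp (2 * c * k * (1 + t ^ 2)))
              = C₀ * Real.exp (-k * t ^ 2 * (‖z‖ / 2) + 2 * c * k * (1 + t ^ 2)) from by
            rw [Real.exp_add]; ring]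
          congr 1
          ring
  -- integrability
  have hmeasf : AEStronglyMeasurable f volume := by
    apply (Measurable.mul ?_ hb).aestronglyMeasurable
    exact Complex.measurable_exp.comp (by fun_prop)
  have hdomint : Integrable (fun t : ℝ => M * Real.exp (-a * t ^ 2)) :=
    (integrable_exp_neg_mul_sq ha).const_mul M
  have hfint : Integrable f := by
    refine hdomint.mono' hmeasf (Filter.Eventually.of_forall hpt)
  have hS : {t : ℝ | δ ≤ |t|} = Iic (-δ) ∪ Ici δ := by
    ext t
    simp only [mem_setOf_eq, mem_union, mem_Iic, mem_Ici, le_abs]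
    constructor
    · rintro (h | h); · right; exact h
      · left; linarith
    · rintro (h | h); · right; linarith
      · left; exact h
  have hSmeas : MeasurableSet {t : ℝ | δ ≤ |t|} := by
    rw [hS]; exact measurableSet_Iic.union measurableSet_Ici
  refine ⟨hfint.integrableOn, ?_⟩
  -- bound
  have step1 : ‖∫ t in {t : ℝ | δ ≤ |t|}, f t‖ ≤
      ∫ t in {t : ℝ | δ ≤ |t|}, M * Real.exp (-a * t ^ 2) := by
    refine (norm_integral_le_integral_norm f).trans ?_
    exact setIntegral_mono_on hfint.norm.integrableOn hdomint.integrableOn hSmeas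
      (fun t _ => hpt t)
  have hdisj : Disjoint (Iic (-δ)) (Ici δ) := by
    rw [Iic_disjoint_Ici]
    exact not_le.mpr (by linarith)
  have step2 : (∫ t in {t : ℝ | δ ≤ |t|}, M * Real.exp (-a * t ^ 2))
      = 2 * ∫ t in Ici δ, M * Real.exp (-a * t ^ 2) := by
    rw [hS, setIntegral_union hdisj measurableSet_Ici hdomint.integrableOn
      hdomint.integrableOn]
    have : (∫ t in Iic (-δ), M * Real.exp (-a * t ^ 2))
        = ∫ t in Ici δ, M * Real.exp (-a * t ^ 2) := by
      have hneg := integral_comp_neg_Iic (-δ) (fun s => M * Real.exp (-a * s ^ 2))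
      simp only [neg_neg, neg_sq] at hneg
      rw [integral_Ici_eq_integral_Ioi]
      exact hneg
    rw [this]; ring
  have step3 : (∫ t in Ici δ, M * Real.exp (-a * t ^ 2))
      ≤ M * (Real.exp (-a * δ ^ 2) / (2 * a * δ)) := by
    rw [integral_const_mul]
    exact mul_le_mul_of_nonneg_left (tail_gauss a δ ha hδ) hM0
  calc ‖∫ t in {t : ℝ | δ ≤ |t|}, f t‖
      ≤ ∫ t in {t : ℝ | δ ≤ |t|}, M * Real.exp (-a * t ^ 2) := step1
    _ = 2 * ∫ t in Ici δ, M * Real.exp (-a * t ^ 2) := step2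
    _ ≤ 2 * (M * (Real.exp (-a * δ ^ 2) / (2 * a * δ))) := by linarith [step3]
    _ = M * Real.exp (-a * δ ^ 2) / (a * δ) := by
        field_simp
    _ = C₀ * Real.exp (2 * c * k) *
          Real.exp (-k * (‖z‖ / 2 - 2 * c) * δ ^ 2) /
            (k * (‖z‖ / 2 - 2 * c) * δ) := by
        rw [hM, ha_def]; ring_nf

end
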